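/- Let k ≥ 0 be an integer and let P be the Petersen graph. If G is a (k+3)-regular multigraph obtained from P by adding (parallel copies of) k 1-factors of P (i.e., V(G) = V(P) and E(G) is the disjoint union of E(P) with copies of the edge sets of k perfect matchings of P), then G is a class 2 graph. -/

import Mathlib

structure Multigraph where
  V : Type
  E : Type
  [finV : Finite V]
  [finE : Finite E]
  fst : E → V
  snd : E → V

attribute [instance] Multigraph.finV Multigraph.finE

namespace Multigraph

/-- The degree of a vertex (loops count twice). -/
noncomputable def degree (G : Multigraph) (v : G.V) : ℕ :=
  Nat.card {e : G.E // G.fst e = v} + Nat.card {e : G.E // G.snd e = v}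

def IsRegular (G : Multigraph) (k : ℕ) : Prop := ∀ v, G.degree v = k

/-- `φ` is a nowhere-zero `r`-flow: values have absolute value in `[1, r-1]`
(the sign of `φ e` encodes the chosen orientation of `e`), and flow is conserved
at every vertex. -/
def IsNowhereZeroFlow (G : Multigraph) (r : ℝ) (φ : G.E → ℝ) : Prop :=
  (∀ e, 1 ≤ |φ e| ∧ |φ e| ≤ r - 1) ∧
  ∀ v : G.V, (∑ᶠ e ∈ {e : G.E | G.fst e = v}, φ e) = ∑ᶠ e ∈ {e : G.E | G.snd e = v}, φ e

def HasNowhereZeroFlow (G : Multigraph) (r : ℝ) : Prop := ∃ φ, G.IsNowhereZeroFlow r φ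

/-- The circular flow number, `⊤` if `G` has no nowhere-zero flow. -/
noncomputable def flowNumber (G : Multigraph) : EReal :=
  sInf {x : EReal | ∃ r : ℝ, x = (r : EReal) ∧ G.HasNowhereZeroFlow r}

def Bipartite (G : Multigraph) : Prop :=
  ∃ c : G.V → Bool, ∀ e, c (G.fst e) ≠ c (G.snd e)

def IsOneFactor (G : Multigraph) (F : Set G.E) : Prop :=
  (∀ e ∈ F, G.fst e ≠ G.snd e) ∧
  ∀ v : G.V, ∃! e : G.E, e ∈ F ∧ (G.fst e = v ∨ G.snd e = v)

/-- `G - F` is bipartite. -/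
def BipartiteWithout (G : Multigraph) (F : Set G.E) : Prop :=
  ∃ c : G.V → Bool, ∀ e ∉ F, c (G.fst e) ≠ c (G.snd e)

def IsProperEdgeColoring (G : Multigraph) {n : ℕ} (c : G.E → Fin n) : Prop :=
  ∀ e₁ e₂ : G.E, e₁ ≠ e₂ →
    (G.fst e₁ = G.fst e₂ ∨ G.fst e₁ = G.snd e₂ ∨ G.snd e₁ = G.fst e₂ ∨ G.snd e₁ = G.snd e₂) →
    c e₁ ≠ c e₂

noncomputable def edgeChromaticNumber (G : Multigraph) : ℕ :=
  sInf {n : ℕ | ∃ c : G.E → Fin n, G.IsProperEdgeColoring c}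

def edgeBoundary (G : Multigraph) (X : Set G.V) : Set G.E :=
  {e | (G.fst e ∈ X) ≠ (G.snd e ∈ X)}

def IsBalancedValuation (G : Multigraph) (w : G.V → ℝ) : Prop :=
  ∀ X : Set G.V, |∑ᶠ v ∈ X, w v| ≤ (G.edgeBoundary X).ncard

end Multigraph

/-- Vertices of the Petersen graph: 2-element subsets of a 5-element set. -/
abbrev PetersenVertex : Type := {s : Finset (Fin 5) // s.card = 2}

/-- The Petersen graph as the Kneser graph `K(5,2)`: two 2-subsets are adjacent
iff they are disjoint. -/
def petersen : SimpleGraph PetersenVertex where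
  Adj a b := Disjoint a.1 b.1
  symm := ⟨fun _ _ h => Disjoint.symm h⟩
  loopless := by
    constructor
    intro a h
    rw [disjoint_self] at h
    have := a.2
    simp [h] at this

/-- The Petersen graph viewed as a multigraph; each edge `e` gets the two ends of
a (fixed) representative of the unordered pair `e`. -/
noncomputable def petersenMultigraph : Multigraph where
  V := PetersenVertex
  E := ↥petersen.edgeSet
  fst e := (Quot.out e.val).1
  snd e := (Quot.out e.val).2

/-- The multigraph obtained from the Petersen graph by adding (a parallel copy of the
edge set of) each of the `k` subgraphs `M i`: the vertex set is that of the Petersen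
graph and the edges are the disjoint union of the edges of the Petersen graph with
copies of the edge sets of the `M i`. -/
noncomputable def petersenPlusMatchings (k : ℕ) (M : Fin k → petersen.Subgraph) :
    Multigraph where
  V := PetersenVertex
  E := ↥petersen.edgeSet ⊕ (Σ i : Fin k, ↥(M i).edgeSet)
  fst := Sum.elim (fun e => (Quot.out e.val).1) (fun p => (Quot.out p.2.val).1)
  snd := Sum.elim (fun e => (Quot.out e.val).2) (fun p => (Quot.out p.2.val).2)


section Aux

open Multigraph
open scoped Classical

instance : DecidableRel petersen.Adj :=
  fun a b => inferInstanceAs (Decidable (Disjoint a.1 b.1))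

def v01 : PetersenVertex := ⟨{0,1}, by decide⟩
def v02 : PetersenVertex := ⟨{0,2}, by decide⟩
def v03 : PetersenVertex := ⟨{0,3}, by decide⟩
def v04 : PetersenVertex := ⟨{0,4}, by decide⟩
def v12 : PetersenVertex := ⟨{1,2}, by decide⟩
def v13 : PetersenVertex := ⟨{1,3}, by decide⟩
def v14 : PetersenVertex := ⟨{1,4}, by decide⟩
def v23 : PetersenVertex := ⟨{2,3}, by decide⟩
def v24 : PetersenVertex := ⟨{2,4}, by decide⟩
def v34 : PetersenVertex := ⟨{3,4}, by decide⟩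
lemma nbr_v01 : ∀ w, petersen.Adj v01 w → w = v23 ∨ w = v24 ∨ w = v34 := by decide
lemma nbr_v02 : ∀ w, petersen.Adj v02 w → w = v13 ∨ w = v14 ∨ w = v34 := by decide
lemma nbr_v03 : ∀ w, petersen.Adj v03 w → w = v12 ∨ w = v14 ∨ w = v24 := by decide
lemma nbr_v04 : ∀ w, petersen.Adj v04 w → w = v12 ∨ w = v13 ∨ w = v23 := by decide
lemma nbr_v12 : ∀ w, petersen.Adj v12 w → w = v03 ∨ w = v04 ∨ w = v34 := by decide
lemma nbr_v13 : ∀ w, petersen.Adj v13 w → w = v02 ∨ w = v04 ∨ w = v24 := by decide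
lemma nbr_v14 : ∀ w, petersen.Adj v14 w → w = v02 ∨ w = v03 ∨ w = v23 := by decide
lemma nbr_v23 : ∀ w, petersen.Adj v23 w → w = v01 ∨ w = v04 ∨ w = v14 := by decide
lemma nbr_v24 : ∀ w, petersen.Adj v24 w → w = v01 ∨ w = v03 ∨ w = v13 := by decide
lemma nbr_v34 : ∀ w, petersen.Adj v34 w → w = v01 ∨ w = v02 ∨ w = v12 := by decide

/-- Key combinatorial fact about the Petersen graph: every perfect matching
(encoded as an adjacency-respecting involution) contains an even number of the
three edges `s(v01,v23)`, `s(v02,v14)`, `s(v24,v13)`. -/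
lemma petersen_matching_even (f : PetersenVertex → PetersenVertex)
    (hadj : ∀ v, petersen.Adj v (f v)) (hinv : ∀ v, f (f v) = v) :
    Even ((if f v01 = v23 then 1 else 0) + (if f v02 = v14 then 1 else 0) +
      (if f v24 = v13 then 1 else 0)) := by
  rcases nbr_v01 (f v01) (hadj v01) with h1 | h1 | h1
  · have h2 : f v23 = v01 := by rw [← h1]; exact hinv v01
    rcases nbr_v04 (f v04) (hadj v04) with h3 | h3 | h3
    · have h4 : f v12 = v04 := by rw [← h3]; exact hinv v04
      rcases nbr_v34 (f v34) (hadj v34) with h5 | h5 | h5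
      · exact absurd (show v34 = v23 by rw [← hinv v34, h5, h1]) (by decide)
      · have h6 : f v02 = v34 := by rw [← h5]; exact hinv v34
        rcases nbr_v13 (f v13) (hadj v13) with h7 | h7 | h7
        · exact absurd (show v13 = v34 by rw [← hinv v13, h7, h6]) (by decide)
        · exact absurd (show v13 = v12 by rw [← hinv v13, h7, h3]) (by decide)
        · have h8 : f v24 = v13 := by rw [← h7]; exact hinv v13
          rcases nbr_v03 (f v03) (hadj v03) with h9 | h9 | h9
          · exact absurd (show v03 = v04 by rw [← hinv v03, h9, h4]) (by decide)
          · have h10 : f v14 = v03 := by rw [← h9]; exact hinv v03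
            simp only [h1, h6, h8]; decide
          · exact absurd (show v03 = v13 by rw [← hinv v03, h9, h8]) (by decide)
      · exact absurd (show v34 = v04 by rw [← hinv v34, h5, h4]) (by decide)
    · have h11 : f v13 = v04 := by rw [← h3]; exact hinv v04
      rcases nbr_v24 (f v24) (hadj v24) with h12 | h12 | h12
      · exact absurd (show v24 = v23 by rw [← hinv v24, h12, h1]) (by decide)
      · have h13 : f v03 = v24 := by rw [← h12]; exact hinv v24
        rcases nbr_v12 (f v12) (hadj v12) with h14 | h14 | h14
        · exact absurd (show v12 = v24 by rw [← hinv v12, h14, h13]) (by decide)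
        · exact absurd (show v12 = v13 by rw [← hinv v12, h14, h3]) (by decide)
        · have h15 : f v34 = v12 := by rw [← h14]; exact hinv v12
          rcases nbr_v02 (f v02) (hadj v02) with h16 | h16 | h16
          · exact absurd (show v02 = v04 by rw [← hinv v02, h16, h11]) (by decide)
          · have h17 : f v14 = v02 := by rw [← h16]; exact hinv v02
            simp only [h1, h16, h12]; decide
          · exact absurd (show v02 = v12 by rw [← hinv v02, h16, h15]) (by decide)
      · exact absurd (show v24 = v04 by rw [← hinv v24, h12, h11]) (by decide)
    · exact absurd (show v04 = v01 by rw [← hinv v04, h3, h2]) (by decide)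
  · have h18 : f v24 = v01 := by rw [← h1]; exact hinv v01
    rcases nbr_v03 (f v03) (hadj v03) with h19 | h19 | h19
    · have h20 : f v12 = v03 := by rw [← h19]; exact hinv v03
      rcases nbr_v34 (f v34) (hadj v34) with h21 | h21 | h21
      · exact absurd (show v34 = v24 by rw [← hinv v34, h21, h1]) (by decide)
      · have h22 : f v02 = v34 := by rw [← h21]; exact hinv v34
        rcases nbr_v13 (f v13) (hadj v13) with h23 | h23 | h23
        · exact absurd (show v13 = v34 by rw [← hinv v13, h23, h22]) (by decide)
        · have h24 : f v04 = v13 := by rw [← h23]; exact hinv v13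
          rcases nbr_v14 (f v14) (hadj v14) with h25 | h25 | h25
          · exact absurd (show v14 = v34 by rw [← hinv v14, h25, h22]) (by decide)
          · exact absurd (show v14 = v12 by rw [← hinv v14, h25, h19]) (by decide)
          · have h26 : f v23 = v14 := by rw [← h25]; exact hinv v14
            simp only [h1, h22, h18]; decide
        · exact absurd (show v13 = v01 by rw [← hinv v13, h23, h18]) (by decide)
      · exact absurd (show v34 = v03 by rw [← hinv v34, h21, h20]) (by decide)
    · have h27 : f v14 = v03 := by rw [← h19]; exact hinv v03
      rcases nbr_v23 (f v23) (hadj v23) with h28 | h28 | h28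
      · exact absurd (show v23 = v24 by rw [← hinv v23, h28, h1]) (by decide)
      · have h29 : f v04 = v23 := by rw [← h28]; exact hinv v23
        rcases nbr_v12 (f v12) (hadj v12) with h30 | h30 | h30
        · exact absurd (show v12 = v14 by rw [← hinv v12, h30, h19]) (by decide)
        · exact absurd (show v12 = v23 by rw [← hinv v12, h30, h29]) (by decide)
        · have h31 : f v34 = v12 := by rw [← h30]; exact hinv v12
          rcases nbr_v02 (f v02) (hadj v02) with h32 | h32 | h32
          · have h33 : f v13 = v02 := by rw [← h32]; exact hinv v02
            simp only [h1, h32, h18]; decide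
          · exact absurd (show v02 = v03 by rw [← hinv v02, h32, h27]) (by decide)
          · exact absurd (show v02 = v12 by rw [← hinv v02, h32, h31]) (by decide)
      · exact absurd (show v23 = v03 by rw [← hinv v23, h28, h27]) (by decide)
    · exact absurd (show v03 = v01 by rw [← hinv v03, h19, h18]) (by decide)
  · have h34 : f v34 = v01 := by rw [← h1]; exact hinv v01
    rcases nbr_v02 (f v02) (hadj v02) with h35 | h35 | h35
    · have h36 : f v13 = v02 := by rw [← h35]; exact hinv v02
      rcases nbr_v24 (f v24) (hadj v24) with h37 | h37 | h37
      · exact absurd (show v24 = v34 by rw [← hinv v24, h37, h1]) (by decide)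
      · have h38 : f v03 = v24 := by rw [← h37]; exact hinv v24
        rcases nbr_v12 (f v12) (hadj v12) with h39 | h39 | h39
        · exact absurd (show v12 = v24 by rw [← hinv v12, h39, h38]) (by decide)
        · have h40 : f v04 = v12 := by rw [← h39]; exact hinv v12
          rcases nbr_v14 (f v14) (hadj v14) with h41 | h41 | h41
          · exact absurd (show v14 = v13 by rw [← hinv v14, h41, h35]) (by decide)
          · exact absurd (show v14 = v24 by rw [← hinv v14, h41, h38]) (by decide)
          · have h42 : f v23 = v14 := by rw [← h41]; exact hinv v14
            simp only [h1, h35, h37]; decide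
        · exact absurd (show v12 = v01 by rw [← hinv v12, h39, h34]) (by decide)
      · exact absurd (show v24 = v02 by rw [← hinv v24, h37, h36]) (by decide)
    · have h43 : f v14 = v02 := by rw [← h35]; exact hinv v02
      rcases nbr_v23 (f v23) (hadj v23) with h44 | h44 | h44
      · exact absurd (show v23 = v34 by rw [← hinv v23, h44, h1]) (by decide)
      · have h45 : f v04 = v23 := by rw [← h44]; exact hinv v23
        rcases nbr_v12 (f v12) (hadj v12) with h46 | h46 | h46
        · have h47 : f v03 = v12 := by rw [← h46]; exact hinv v12
          rcases nbr_v13 (f v13) (hadj v13) with h48 | h48 | h48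
          · exact absurd (show v13 = v14 by rw [← hinv v13, h48, h35]) (by decide)
          · exact absurd (show v13 = v23 by rw [← hinv v13, h48, h45]) (by decide)
          · have h49 : f v24 = v13 := by rw [← h48]; exact hinv v13
            simp only [h1, h35, h49]; decide
        · exact absurd (show v12 = v23 by rw [← hinv v12, h46, h45]) (by decide)
        · exact absurd (show v12 = v01 by rw [← hinv v12, h46, h34]) (by decide)
      · exact absurd (show v23 = v02 by rw [← hinv v23, h44, h43]) (by decide)
    · exact absurd (show v02 = v01 by rw [← hinv v02, h35, h34]) (by decide)

lemma invol_edge_congr {f : PetersenVertex → PetersenVertex} (hinv : ∀ v, f (f v) = v)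
    {a b x y : PetersenVertex} (h : s(a, b) = s(x, y)) : f a = b ↔ f x = y := by
  rw [Sym2.eq_iff] at h
  rcases h with ⟨rfl, rfl⟩ | ⟨rfl, rfl⟩
  · rfl
  · constructor <;> intro h <;> rw [← h, hinv]

lemma sym2_mk_out (ε : Sym2 PetersenVertex) : s((Quot.out ε).1, (Quot.out ε).2) = ε :=
  Quot.out_eq ε

lemma out_adj {ε : Sym2 PetersenVertex} (hε : ε ∈ petersen.edgeSet) :
    petersen.Adj (Quot.out ε).1 (Quot.out ε).2 :=
  (SimpleGraph.mem_edgeSet _).mp (by rw [sym2_mk_out]; exact hε)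

/-- A subtype over a disjunction of disjoint predicates is a sum of subtypes. -/
noncomputable def orEquiv {α : Type*} {p q : α → Prop} [DecidablePred p] (h : ∀ a, p a → q a → False) :
    {x // p x ∨ q x} ≃ {x // p x} ⊕ {x // q x} where
  toFun x := if hp : p x.1 then Sum.inl ⟨x.1, hp⟩ else Sum.inr ⟨x.1, x.2.resolve_left hp⟩
  invFun y := Sum.elim (fun a => ⟨a.1, Or.inl a.2⟩) (fun b => ⟨b.1, Or.inr b.2⟩) y
  left_inv x := by by_cases hp : p x.1 <;> simp [hp]
  right_inv y := by
    rcases y with a | b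
    · simp [a.2]
    · have : ¬ p b.1 := fun hp => h b.1 hp b.2
      simp [this]

/-- A subtype of a sigma type with a fiberwise predicate. -/
def sigmaSubtypeEquiv {ι : Type*} {β : ι → Type*} (q : ∀ i, β i → Prop) :
    {x : Σ i, β i // q x.1 x.2} ≃ Σ i, {b : β i // q i b} where
  toFun x := ⟨x.1.1, ⟨x.1.2, x.2⟩⟩
  invFun y := ⟨⟨y.1, y.2.1⟩, y.2.2⟩
  left_inv x := rfl
  right_inv y := rfl

lemma nat_card_sigma {ι : Type*} [Fintype ι] (β : ι → Type*) [∀ i, Finite (β i)] :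
    Nat.card (Σ i, β i) = ∑ i, Nat.card (β i) := by
  letI : ∀ i, Fintype (β i) := fun i => Fintype.ofFinite _
  simp [Nat.card_eq_fintype_card, Fintype.card_sigma]

lemma card_subtype_val_eq {X : Type*} (S : Set X) (ε : X) :
    Nat.card {e : S // e.1 = ε} = if ε ∈ S then 1 else 0 := by
  classical
  split_ifs with h
  · rw [Nat.card_eq_one_iff_unique]
    refine ⟨⟨fun x y => Subtype.ext (Subtype.ext (x.2.trans y.2.symm))⟩, ⟨⟨⟨ε, h⟩, rfl⟩⟩⟩
  · have : IsEmpty {e : S // e.1 = ε} := ⟨fun x => h (x.2 ▸ x.1.2)⟩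
    simp

variable {k : ℕ} {M : Fin k → petersen.Subgraph}

/-- Projection of an edge of the multigraph to the underlying Petersen edge. -/
def pproj (k : ℕ) (M : Fin k → petersen.Subgraph) (e : (petersenPlusMatchings k M).E) :
    Sym2 PetersenVertex :=
  Sum.elim (fun e => e.val) (fun p => p.2.val) e

lemma pproj_mem (e : (petersenPlusMatchings k M).E) : pproj k M e ∈ petersen.edgeSet := by
  rcases e with a | p
  · exact a.2
  · exact (M p.1).edgeSet_subset p.2.2

lemma fst_eq (e : (petersenPlusMatchings k M).E) :
    (petersenPlusMatchings k M).fst e = (Quot.out (pproj k M e)).1 := by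
  rcases e with a | p <;> rfl

lemma snd_eq (e : (petersenPlusMatchings k M).E) :
    (petersenPlusMatchings k M).snd e = (Quot.out (pproj k M e)).2 := by
  rcases e with a | p <;> rfl

lemma adj_ends (e : (petersenPlusMatchings k M).E) :
    petersen.Adj ((petersenPlusMatchings k M).fst e) ((petersenPlusMatchings k M).snd e) := by
  rw [fst_eq, snd_eq]; exact out_adj (pproj_mem e)

lemma no_loop (e : (petersenPlusMatchings k M).E) :
    (petersenPlusMatchings k M).fst e ≠ (petersenPlusMatchings k M).snd e :=
  (adj_ends e).ne

lemma mk_fst_snd (e : (petersenPlusMatchings k M).E) :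
    s((petersenPlusMatchings k M).fst e, (petersenPlusMatchings k M).snd e) = pproj k M e := by
  rw [fst_eq, snd_eq]; exact sym2_mk_out _

lemma card_star (hreg : (petersenPlusMatchings k M).IsRegular (k + 3)) (v : PetersenVertex) :
    Nat.card {e : (petersenPlusMatchings k M).E //
      (petersenPlusMatchings k M).fst e = v ∨ (petersenPlusMatchings k M).snd e = v} = k + 3 := by
  classical
  have hd := hreg v
  unfold Multigraph.degree at hd
  rw [Nat.card_congr (orEquiv (fun e hf hs => no_loop e (hf.trans hs.symm))), Nat.card_sum]
  exact hd

variable {c : (petersenPlusMatchings k M).E → Fin (k + 3)}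

lemma exists_unique_color (hc : (petersenPlusMatchings k M).IsProperEdgeColoring c)
    (hreg : (petersenPlusMatchings k M).IsRegular (k + 3))
    (v : PetersenVertex) (j : Fin (k + 3)) :
    ∃! e : (petersenPlusMatchings k M).E,
      ((petersenPlusMatchings k M).fst e = v ∨ (petersenPlusMatchings k M).snd e = v) ∧ c e = j := by
  have hinj : Function.Injective (fun e : {e : (petersenPlusMatchings k M).E //
      (petersenPlusMatchings k M).fst e = v ∨ (petersenPlusMatchings k M).snd e = v} => c e.1) := by
    intro e₁ e₂ h
    by_contra hne
    have hne' : e₁.1 ≠ e₂.1 := fun h' => hne (Subtype.ext h')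
    have h2 : c e₁.1 = c e₂.1 := h
    refine hc e₁.1 e₂.1 hne' ?_ h2
    rcases e₁.2 with h1 | h1 <;> rcases e₂.2 with h2 | h2
    · exact Or.inl (h1.trans h2.symm)
    · exact Or.inr (Or.inl (h1.trans h2.symm))
    · exact Or.inr (Or.inr (Or.inl (h1.trans h2.symm)))
    · exact Or.inr (Or.inr (Or.inr (h1.trans h2.symm)))
  have hbij : Function.Bijective (fun e : {e : (petersenPlusMatchings k M).E //
      (petersenPlusMatchings k M).fst e = v ∨ (petersenPlusMatchings k M).snd e = v} => c e.1) := by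
    rw [Nat.bijective_iff_injective_and_card]
    refine ⟨hinj, ?_⟩
    rw [card_star hreg v]
    simp
  obtain ⟨e, he⟩ := hbij.surjective j
  have he2 : c e.1 = j := he
  refine ⟨e.1, ⟨e.2, he2⟩, fun e' he' => ?_⟩
  have heq : (fun e : {e : (petersenPlusMatchings k M).E //
      (petersenPlusMatchings k M).fst e = v ∨ (petersenPlusMatchings k M).snd e = v} => c e.1)
        ⟨e', he'.1⟩ =
      (fun e : {e : (petersenPlusMatchings k M).E //
      (petersenPlusMatchings k M).fst e = v ∨ (petersenPlusMatchings k M).snd e = v} => c e.1) e := by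
    show c e' = c e.1
    rw [he'.2, he2]
  exact congrArg Subtype.val (hbij.injective heq)

variable (hu : ∀ (v : PetersenVertex) (j : Fin (k + 3)),
    ∃! e : (petersenPlusMatchings k M).E,
      ((petersenPlusMatchings k M).fst e = v ∨ (petersenPlusMatchings k M).snd e = v) ∧ c e = j)

/-- The edge at `v` with color `j`. -/
noncomputable def edgeAt (j : Fin (k + 3)) (v : PetersenVertex) :
    (petersenPlusMatchings k M).E :=
  (hu v j).choose

lemma edgeAt_mem (j : Fin (k + 3)) (v : PetersenVertex) :
    (petersenPlusMatchings k M).fst (edgeAt hu j v) = v ∨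
      (petersenPlusMatchings k M).snd (edgeAt hu j v) = v :=
  (hu v j).choose_spec.1.1

lemma edgeAt_color (j : Fin (k + 3)) (v : PetersenVertex) :
    c (edgeAt hu j v) = j :=
  (hu v j).choose_spec.1.2

lemma edgeAt_unique (j : Fin (k + 3)) (v : PetersenVertex)
    (e : (petersenPlusMatchings k M).E)
    (hm : (petersenPlusMatchings k M).fst e = v ∨ (petersenPlusMatchings k M).snd e = v)
    (hcol : c e = j) : e = edgeAt hu j v :=
  (hu v j).choose_spec.2 e ⟨hm, hcol⟩

/-- The partner of `v` in the perfect matching formed by color class `j`. -/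
noncomputable def colorPartner (j : Fin (k + 3)) (v : PetersenVertex) : PetersenVertex :=
  if (petersenPlusMatchings k M).fst (edgeAt hu j v) = v then
    (petersenPlusMatchings k M).snd (edgeAt hu j v)
  else (petersenPlusMatchings k M).fst (edgeAt hu j v)

lemma colorPartner_adj (j : Fin (k + 3)) (v : PetersenVertex) :
    petersen.Adj v (colorPartner hu j v) := by
  unfold colorPartner
  split_ifs with h
  · have := adj_ends (edgeAt hu j v)
    rw [h] at this
    exact (congrArg (petersen.Adj v) (if_pos h)).mpr this
  · have h2 := (edgeAt_mem hu j v).resolve_left h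
    have := (adj_ends (edgeAt hu j v)).symm
    rw [h2] at this
    exact (congrArg (petersen.Adj v) (if_neg h)).mpr this

lemma edgeAt_partner (j : Fin (k + 3)) (v : PetersenVertex) :
    edgeAt hu j (colorPartner hu j v) = edgeAt hu j v := by
  refine (edgeAt_unique hu j _ _ ?_ (edgeAt_color hu j v)).symm
  unfold colorPartner
  split_ifs with h
  · exact Or.inr (if_pos h).symm
  · exact Or.inl (if_neg h).symm

lemma colorPartner_eq_snd (j : Fin (k + 3)) (v : PetersenVertex)
    (h : (petersenPlusMatchings k M).fst (edgeAt hu j v) = v) :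
    colorPartner hu j v = (petersenPlusMatchings k M).snd (edgeAt hu j v) := by
  unfold colorPartner; exact if_pos h

lemma colorPartner_eq_fst (j : Fin (k + 3)) (v : PetersenVertex)
    (h : ¬ (petersenPlusMatchings k M).fst (edgeAt hu j v) = v) :
    colorPartner hu j v = (petersenPlusMatchings k M).fst (edgeAt hu j v) := by
  unfold colorPartner; exact if_neg h

lemma colorPartner_invol (j : Fin (k + 3)) (v : PetersenVertex) :
    colorPartner hu j (colorPartner hu j v) = v := by
  have hp : edgeAt hu j (colorPartner hu j v) = edgeAt hu j v := edgeAt_partner hu j v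
  by_cases h : (petersenPlusMatchings k M).fst (edgeAt hu j v) = v
  · have hw := colorPartner_eq_snd hu j v h
    have h2 : ¬ (petersenPlusMatchings k M).fst (edgeAt hu j (colorPartner hu j v)) =
        colorPartner hu j v := by
      rw [hp, hw, h]
      exact fun hcon => no_loop _ (h.trans hcon)
    rw [colorPartner_eq_fst hu j _ h2, hp, h]
  · have h2 := (edgeAt_mem hu j v).resolve_left h
    have hw := colorPartner_eq_fst hu j v h
    have h3 : (petersenPlusMatchings k M).fst (edgeAt hu j (colorPartner hu j v)) =
        colorPartner hu j v := by rw [hp, hw]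
    rw [colorPartner_eq_snd hu j _ h3, hp, h2]

lemma card_fiber_color (hc : (petersenPlusMatchings k M).IsProperEdgeColoring c)
    (j : Fin (k + 3)) {a b : PetersenVertex} (hab : s(a, b) ∈ petersen.edgeSet) :
    Nat.card {e : (petersenPlusMatchings k M).E // pproj k M e = s(a, b) ∧ c e = j} =
      if colorPartner hu j a = b then 1 else 0 := by
  have hne : a ≠ b := ((SimpleGraph.mem_edgeSet _).mp hab).ne
  have hsub : ∀ x y : {e : (petersenPlusMatchings k M).E // pproj k M e = s(a, b) ∧ c e = j},
      x = y := by
    rintro ⟨x, hx1, hx2⟩ ⟨y, hy1, hy2⟩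
    by_contra hxy
    have hxy' : x ≠ y := fun h => hxy (by simp [h])
    refine absurd (hx2.trans hy2.symm) (hc x y hxy' ?_)
    exact Or.inl (by rw [fst_eq, fst_eq, hx1, hy1])
  have hat : ∀ e : (petersenPlusMatchings k M).E, pproj k M e = s(a, b) → c e = j →
      colorPartner hu j a = b := by
    intro e h1 h2
    have hfs : s((petersenPlusMatchings k M).fst e, (petersenPlusMatchings k M).snd e) = s(a, b) := by
      rw [mk_fst_snd, h1]
    replace hfs := Sym2.eq_iff.mp hfs
    rcases hfs with ⟨ha, hb⟩ | ⟨ha, hb⟩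
    · have he := edgeAt_unique hu j a e (Or.inl ha) h2
      rw [colorPartner_eq_snd hu j a (by rw [← he]; exact ha), ← he]
      exact hb
    · have he := edgeAt_unique hu j a e (Or.inr hb) h2
      have hfa : ¬ (petersenPlusMatchings k M).fst (edgeAt hu j a) = a := by
        rw [← he]
        exact fun hcon => hne (hcon.symm.trans ha)
      rw [colorPartner_eq_fst hu j a hfa, ← he]
      exact ha
  split_ifs with h
  · rw [Nat.card_eq_one_iff_unique]
    refine ⟨⟨hsub⟩, ?_⟩
    refine ⟨⟨edgeAt hu j a, ?_, edgeAt_color hu j a⟩⟩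
    rw [← mk_fst_snd]
    by_cases hf : (petersenPlusMatchings k M).fst (edgeAt hu j a) = a
    · have hs : (petersenPlusMatchings k M).snd (edgeAt hu j a) = b := by
        rw [← h, colorPartner_eq_snd hu j a hf]
      rw [hf, hs]
      rfl
    · have h2 := (edgeAt_mem hu j a).resolve_left hf
      have hs : (petersenPlusMatchings k M).fst (edgeAt hu j a) = b := by
        rw [← h, colorPartner_eq_fst hu j a hf]
      rw [h2, hs]
      exact Sym2.eq_swap
  · have : IsEmpty {e : (petersenPlusMatchings k M).E // pproj k M e = s(a, b) ∧ c e = j} :=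
      ⟨fun x => h (hat x.1 x.2.1 x.2.2)⟩
    simp

lemma card_fiber_total (ε : Sym2 PetersenVertex) :
    Nat.card {e : (petersenPlusMatchings k M).E // pproj k M e = ε} =
      ∑ j : Fin (k + 3),
        Nat.card {e : (petersenPlusMatchings k M).E // pproj k M e = ε ∧ c e = j} := by
  rw [Nat.card_congr
    (Equiv.sigmaFiberEquiv
      (fun x : {e : (petersenPlusMatchings k M).E // pproj k M e = ε} => c x.1)).symm,
    nat_card_sigma]
  exact Finset.sum_congr rfl fun j _ =>
    Nat.card_congr (Equiv.subtypeSubtypeEquivSubtypeInter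
      (fun e : (petersenPlusMatchings k M).E => pproj k M e = ε) (fun e => c e = j))

lemma card_fiber_split {ε : Sym2 PetersenVertex} (hε : ε ∈ petersen.edgeSet) :
    Nat.card {e : (petersenPlusMatchings k M).E // pproj k M e = ε} =
      1 + ∑ i : Fin k, (if ε ∈ (M i).edgeSet then 1 else 0) := by
  have h0 : Nat.card {e : (petersenPlusMatchings k M).E // pproj k M e = ε} =
      Nat.card {a : ↥petersen.edgeSet // pproj k M (Sum.inl a) = ε} +
      Nat.card {b : (Σ i : Fin k, ↥(M i).edgeSet) // pproj k M (Sum.inr b) = ε} := by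
    rw [← Nat.card_sum]
    exact Nat.card_congr
      (Equiv.subtypeSum (p := fun e : (petersenPlusMatchings k M).E => pproj k M e = ε))
  rw [h0]
  congr 1
  · rw [Nat.card_eq_one_iff_unique]
    exact ⟨⟨fun x y => Subtype.ext (Subtype.ext (x.2.trans y.2.symm))⟩, ⟨⟨⟨ε, hε⟩, rfl⟩⟩⟩
  · have h1 : Nat.card {b : (Σ i : Fin k, ↥(M i).edgeSet) // pproj k M (Sum.inr b) = ε} =
        Nat.card (Σ i : Fin k, {e : ↥(M i).edgeSet // (e : Sym2 PetersenVertex) = ε}) :=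
      Nat.card_congr (sigmaSubtypeEquiv (β := fun i => ↥(M i).edgeSet)
        (fun i e => (e : Sym2 PetersenVertex) = ε))
    rw [h1, nat_card_sigma]
    exact Finset.sum_congr rfl fun i _ => card_subtype_val_eq (M i).edgeSet ε

/-- The partner function of the perfect matching `M i`. -/
noncomputable def matchPartner {i : Fin k} (hMi : (M i).IsPerfectMatching)
    (v : PetersenVertex) : PetersenVertex :=
  (SimpleGraph.Subgraph.isPerfectMatching_iff.mp hMi v).choose

lemma matchPartner_adj' {i : Fin k} (hMi : (M i).IsPerfectMatching) (v : PetersenVertex) :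
    (M i).Adj v (matchPartner hMi v) :=
  (SimpleGraph.Subgraph.isPerfectMatching_iff.mp hMi v).choose_spec.1

lemma matchPartner_adj {i : Fin k} (hMi : (M i).IsPerfectMatching) (v : PetersenVertex) :
    petersen.Adj v (matchPartner hMi v) :=
  (matchPartner_adj' hMi v).adj_sub

lemma matchPartner_invol {i : Fin k} (hMi : (M i).IsPerfectMatching) (v : PetersenVertex) :
    matchPartner hMi (matchPartner hMi v) = v :=
  ((SimpleGraph.Subgraph.isPerfectMatching_iff.mp hMi (matchPartner hMi v))).unique
    (matchPartner_adj' hMi _) (matchPartner_adj' hMi v).symm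

lemma matchPartner_mem {i : Fin k} (hMi : (M i).IsPerfectMatching) (a b : PetersenVertex) :
    s(a, b) ∈ (M i).edgeSet ↔ matchPartner hMi a = b := by
  rw [SimpleGraph.Subgraph.mem_edgeSet]
  constructor
  · intro h
    exact ((SimpleGraph.Subgraph.isPerfectMatching_iff.mp hMi a)).unique
      (matchPartner_adj' hMi a) h
  · intro h; rw [← h]; exact matchPartner_adj' hMi a

end Aux

theorem petersen_plus_matchings_class_two (k : ℕ) (M : Fin k → petersen.Subgraph)
    (hM : ∀ i, (M i).IsPerfectMatching)
    (hreg : (petersenPlusMatchings k M).IsRegular (k + 3)) :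
    k + 3 < (petersenPlusMatchings k M).edgeChromaticNumber := by
  classical
  by_contra hcon
  push_neg at hcon
  obtain ⟨c, hc⟩ : ∃ c : (petersenPlusMatchings k M).E → Fin (k + 3),
      (petersenPlusMatchings k M).IsProperEdgeColoring c := by
    have hne : {n : ℕ | ∃ c : (petersenPlusMatchings k M).E → Fin n,
        (petersenPlusMatchings k M).IsProperEdgeColoring c}.Nonempty := by
      obtain ⟨n, ⟨e⟩⟩ := Finite.exists_equiv_fin (petersenPlusMatchings k M).E
      exact ⟨n, e, fun e₁ e₂ hne _ h => hne (e.injective h)⟩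
    obtain ⟨c₀, hc₀⟩ := Nat.sInf_mem hne
    exact ⟨fun e => Fin.castLE hcon (c₀ e), fun e₁ e₂ hne hsh h =>
      hc₀ e₁ e₂ hne hsh (Fin.castLE_injective _ h)⟩
  have hu : ∀ v j, ∃! e : (petersenPlusMatchings k M).E,
      ((petersenPlusMatchings k M).fst e = v ∨ (petersenPlusMatchings k M).snd e = v) ∧ c e = j :=
    fun v j => exists_unique_color hc hreg v j
  have hε1 : s(v01, v23) ∈ petersen.edgeSet := (SimpleGraph.mem_edgeSet _).mpr (by decide)
  have hε2 : s(v02, v14) ∈ petersen.edgeSet := (SimpleGraph.mem_edgeSet _).mpr (by decide)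
  have hε3 : s(v24, v13) ∈ petersen.edgeSet := (SimpleGraph.mem_edgeSet _).mpr (by decide)
  have key : ∀ (a b : PetersenVertex), s(a, b) ∈ petersen.edgeSet →
      1 + ∑ i : Fin k, (if s(a, b) ∈ (M i).edgeSet then 1 else 0) =
        ∑ j : Fin (k + 3), (if colorPartner hu j a = b then 1 else 0) := by
    intro a b hab
    calc 1 + ∑ i : Fin k, (if s(a, b) ∈ (M i).edgeSet then 1 else 0)
        = Nat.card {e : (petersenPlusMatchings k M).E // pproj k M e = s(a, b)} :=
          (card_fiber_split hab).symm
      _ = ∑ j : Fin (k + 3),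
            Nat.card {e : (petersenPlusMatchings k M).E // pproj k M e = s(a, b) ∧ c e = j} :=
          card_fiber_total _
      _ = ∑ j : Fin (k + 3), (if colorPartner hu j a = b then 1 else 0) :=
          Finset.sum_congr rfl fun j _ => card_fiber_color hu hc j hab
  have E1 := key v01 v23 hε1
  have E2 := key v02 v14 hε2
  have E3 := key v24 v13 hε3
  have hR : Even (∑ j : Fin (k + 3),
      ((if colorPartner hu j v01 = v23 then 1 else 0) +
        (if colorPartner hu j v02 = v14 then 1 else 0) +
        (if colorPartner hu j v24 = v13 then 1 else 0))) := by
    refine Finset.even_sum _ fun j _ =>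
      petersen_matching_even _ (colorPartner_adj hu j) (colorPartner_invol hu j)
  have hL : Even (∑ i : Fin k,
      ((if s(v01, v23) ∈ (M i).edgeSet then 1 else 0) +
        (if s(v02, v14) ∈ (M i).edgeSet then 1 else 0) +
        (if s(v24, v13) ∈ (M i).edgeSet then 1 else 0))) := by
    refine Finset.even_sum _ fun i _ => ?_
    have h1 := matchPartner_mem (hM i) v01 v23
    have h2 := matchPartner_mem (hM i) v02 v14
    have h3 := matchPartner_mem (hM i) v24 v13
    rw [if_congr h1 rfl rfl, if_congr h2 rfl rfl, if_congr h3 rfl rfl]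
    exact petersen_matching_even _ (matchPartner_adj (hM i)) (matchPartner_invol (hM i))
  rw [Finset.sum_add_distrib, Finset.sum_add_distrib] at hR hL
  rcases hR with ⟨r, hr⟩
  rcases hL with ⟨l, hl⟩
  omega
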